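/- Let T ∈ M₄(ℂ) be normal and invertible, with NE corner B and SW corner C, and let T⁻¹ have NE corner B' and SW corner C'. If rank B = rank C, then rank B' = rank C'; and if ‖B‖ = ‖C‖ (operator norms), then ‖B'‖ = ‖C'‖. -/

import Mathlib

open Matrix

noncomputable def opN {n : ℕ} (M : Matrix (Fin n) (Fin n) ℂ) : ℝ :=
  ‖Matrix.toEuclideanCLM (𝕜 := ℂ) M‖

/-- The NE (north-east) 2×2 corner of a 4×4 matrix. -/
def NE (T : Matrix (Fin 4) (Fin 4) ℂ) : Matrix (Fin 2) (Fin 2) ℂ :=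
  ![![T 0 2, T 0 3], ![T 1 2, T 1 3]]

/-- The SW (south-west) 2×2 corner of a 4×4 matrix. -/
def SW (T : Matrix (Fin 4) (Fin 4) ℂ) : Matrix (Fin 2) (Fin 2) ℂ :=
  ![![T 2 0, T 2 1], ![T 3 0, T 3 1]]

def NWb (T : Matrix (Fin 4) (Fin 4) ℂ) : Matrix (Fin 2) (Fin 2) ℂ :=
  ![![T 0 0, T 0 1], ![T 1 0, T 1 1]]
def SEb (T : Matrix (Fin 4) (Fin 4) ℂ) : Matrix (Fin 2) (Fin 2) ℂ :=
  ![![T 2 2, T 2 3], ![T 3 2, T 3 3]]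

lemma opN_nonneg {n : ℕ} (M : Matrix (Fin n) (Fin n) ℂ) : 0 ≤ opN M := norm_nonneg _

/-- The key spectral lemma: `opN M ^ 2` is the largest root of `X^2 - f X + d` where
`f = trace (Mᴴ M)` and `d = det (Mᴴ M)`. -/
lemma opN_key (M : Matrix (Fin 2) (Fin 2) ℂ) (f d : ℝ)
    (hf : (f : ℂ) = Matrix.trace (Mᴴ * M)) (hd : (d : ℂ) = (Mᴴ * M).det) :
    (opN M)^2 * (opN M)^2 - f * ((opN M)^2) + d = 0 ∧ f ≤ 2 * (opN M)^2 := by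
  have hd' : d = Complex.normSq M.det := by
    have h2 : (Mᴴ * M).det = (Complex.normSq M.det : ℂ) := by
      rw [Matrix.det_mul, Matrix.det_conjTranspose]
      simp [Complex.normSq_eq_conj_mul_self]
    exact_mod_cast hd.trans h2
  have hdpos : 0 ≤ d := by rw [hd']; exact Complex.normSq_nonneg _
  have hf' : f = Complex.normSq (M 0 0) + Complex.normSq (M 0 1)
      + Complex.normSq (M 1 0) + Complex.normSq (M 1 1) := by
    have h2 : Matrix.trace (Mᴴ * M) = ((Complex.normSq (M 0 0) + Complex.normSq (M 0 1)
      + Complex.normSq (M 1 0) + Complex.normSq (M 1 1) : ℝ) : ℂ) := by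
      simp only [Matrix.trace_fin_two, Matrix.mul_apply, Fin.sum_univ_two,
        Matrix.conjTranspose_apply]
      push_cast [Complex.normSq_eq_conj_mul_self]
      simp only [Complex.star_def]
      ring
    exact_mod_cast hf.trans h2
  have hfpos : 0 ≤ f := by
    rw [hf']
    have := Complex.normSq_nonneg (M 0 0)
    have := Complex.normSq_nonneg (M 0 1)
    have := Complex.normSq_nonneg (M 1 0)
    have := Complex.normSq_nonneg (M 1 1)
    linarith
  set m := Matrix.toEuclideanCLM (𝕜 := ℂ) M with hm
  set a := Matrix.toEuclideanCLM (𝕜 := ℂ) (Mᴴ * M) with ham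
  have ha : a = star m * m := by
    rw [ham, hm, _root_.map_mul, ← Matrix.star_eq_conjTranspose, map_star]
  have hnorm : ‖a‖ = (opN M)^2 := by
    rw [ha, ContinuousLinearMap.star_eq_adjoint, opN, ← hm, sq]
    exact ContinuousLinearMap.norm_adjoint_comp_self m
  set x := (opN M)^2 with hx
  have hx0 : (0:ℝ) ≤ x := by rw [hx]; positivity
  have hspec : ∀ z : ℂ, z ∈ spectrum ℂ a ↔ z*z - f*z + d = 0 := by
    intro z
    have h1 : (Mᴴ*M) 0 0 + (Mᴴ*M) 1 1 = (f:ℂ) := by rw [hf, Matrix.trace_fin_two]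
    have h2 : (Mᴴ*M) 0 0 * (Mᴴ*M) 1 1 - (Mᴴ*M) 0 1 * (Mᴴ*M) 1 0 = (d:ℂ) := by
      rw [hd, Matrix.det_fin_two]
    have key : ((algebraMap ℂ (Matrix (Fin 2) (Fin 2) ℂ)) z - Mᴴ*M).det
        = z*z - f*z + d := by
      simp only [Matrix.det_fin_two, Matrix.sub_apply, Matrix.algebraMap_matrix_apply,
        if_pos rfl, if_neg (by decide : ¬((0:Fin 2) = 1)), if_neg (by decide : ¬((1:Fin 2) = 0)),
        ite_true, ite_false, Algebra.algebraMap_self_apply]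
      linear_combination (-z) * h1 + h2
    rw [ham, AlgEquiv.spectrum_eq (Matrix.toEuclideanCLM (𝕜 := ℂ)) (Mᴴ * M),
      spectrum.mem_iff, Matrix.isUnit_iff_isUnit_det, key, isUnit_iff_ne_zero, not_not]
  have hsa : IsSelfAdjoint a := by
    rw [ha]
    exact IsSelfAdjoint.star_mul_self m
  have hsr : spectralRadius ℂ a = ‖a‖₊ := hsa.spectralRadius_eq_nnnorm
  obtain ⟨k, hk, hknorm⟩ := spectrum.exists_nnnorm_eq_spectralRadius (a := a)
  have hkre : k = k.re := hsa.mem_spectrum_eq_re hk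
  have habs : |k.re| = x := by
    have h5 : (‖k‖₊ : ENNReal) = (‖a‖₊ : ENNReal) := by rw [hknorm, hsr]
    have h3 : ‖k‖ = ‖a‖ := congrArg NNReal.toReal (ENNReal.coe_inj.mp h5)
    rw [hnorm] at h3
    calc |k.re| = ‖(k.re : ℂ)‖ := by rw [Complex.norm_real, Real.norm_eq_abs]
    _ = ‖k‖ := by rw [← hkre]
    _ = x := h3
  have hroot : k.re*k.re - f*(k.re:ℝ) + d = 0 := by
    have h6 := (hspec k).mp hk
    rw [hkre] at h6
    have h7 := congrArg Complex.re h6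
    push_cast at h7
    simpa using h7
  have part1 : x*x - f*x + d = 0 := by
    rcases abs_cases k.re with ⟨h4, _⟩ | ⟨h4, _⟩
    · have hkx : k.re = x := by rw [← habs, h4]
      rw [← hkx]; exact hroot
    · have hkx : k.re = -x := by linarith [habs, h4]
      rw [hkx] at hroot
      have hx' : x = 0 := by nlinarith
      have hd0 : d = 0 := by nlinarith
      rw [hx', hd0]; ring
  refine ⟨part1, ?_⟩
  have part1' : ((x:ℂ))*x - f*x + d = 0 := by exact_mod_cast congrArg Complex.ofReal part1
  have hnu : ((f - x : ℝ) : ℂ) * ((f - x : ℝ) : ℂ) - f * ((f - x : ℝ) : ℂ) + d = 0 := by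
    push_cast
    linear_combination part1'
  have hmem : ((f - x : ℝ) : ℂ) ∈ spectrum ℂ a := (hspec _).mpr hnu
  have h8 := spectrum.norm_le_norm_of_mem hmem
  rw [hnorm] at h8
  rw [Complex.norm_real, Real.norm_eq_abs] at h8
  have h9 := abs_le.mp h8
  linarith [h9.2]

lemma rank_aux {n : ℕ} (A B C D X Y : Matrix (Fin n) (Fin n) ℂ)
    (h1 : A*X + B*Y = 0) (h2 : C*X + D*Y = 1) : B.rank ≤ X.rank := by
  have hmem : ∀ v ∈ LinearMap.ker X.mulVecLin, Y.mulVecLin v ∈ LinearMap.ker B.mulVecLin := by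
    intro v hv
    have hXv : X.mulVec v = 0 := hv
    simp only [LinearMap.mem_ker, Matrix.mulVecLin_apply]
    have h3 : (A*X).mulVec v + (B*Y).mulVec v = 0 := by
      rw [← Matrix.add_mulVec, h1, Matrix.zero_mulVec]
    rw [← Matrix.mulVec_mulVec, ← Matrix.mulVec_mulVec, hXv, Matrix.mulVec_zero] at h3
    simpa using h3
  set g := Y.mulVecLin.restrict hmem with hg
  have hinj : Function.Injective g := by
    intro v w hvw
    have hYv : Y.mulVec v.1 = Y.mulVec w.1 := congrArg Subtype.val hvw
    have recover : ∀ u : LinearMap.ker X.mulVecLin, D.mulVec (Y.mulVec u.1) = u.1 := by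
      intro u
      have hXu : X.mulVec u.1 = 0 := u.2
      have h4 : (C*X).mulVec u.1 + (D*Y).mulVec u.1 = u.1 := by
        rw [← Matrix.add_mulVec, h2, Matrix.one_mulVec]
      rw [← Matrix.mulVec_mulVec, ← Matrix.mulVec_mulVec, hXu, Matrix.mulVec_zero] at h4
      simpa using h4
    ext1
    rw [← recover v, ← recover w, hYv]
  have hle : Module.finrank ℂ (LinearMap.ker X.mulVecLin)
      ≤ Module.finrank ℂ (LinearMap.ker B.mulVecLin) :=
    LinearMap.finrank_le_finrank_of_injective hinj
  have e1 := LinearMap.finrank_range_add_finrank_ker X.mulVecLin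
  have e2 := LinearMap.finrank_range_add_finrank_ker B.mulVecLin
  have hrX : X.rank = Module.finrank ℂ (LinearMap.range X.mulVecLin) := rfl
  have hrB : B.rank = Module.finrank ℂ (LinearMap.range B.mulVecLin) := rfl
  rw [hrX, hrB]
  omega

lemma decomp (T : Matrix (Fin 4) (Fin 4) ℂ) :
    T = Matrix.reindex finSumFinEquiv finSumFinEquiv
      (Matrix.fromBlocks (NWb T) (NE T) (SW T) (SEb T)) := by
  ext i j
  fin_cases i <;> fin_cases j <;> rfl

lemma blocks_of_mul_eq_one {T S : Matrix (Fin 4) (Fin 4) ℂ} (h : T * S = 1) :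
    NWb T * NWb S + NE T * SW S = 1 ∧ NWb T * NE S + NE T * SEb S = 0 ∧
    SW T * NWb S + SEb T * SW S = 0 ∧ SW T * NE S + SEb T * SEb S = 1 := by
  have e1 : Matrix.reindex finSumFinEquiv finSumFinEquiv
      (Matrix.fromBlocks (NWb T) (NE T) (SW T) (SEb T) *
        Matrix.fromBlocks (NWb S) (NE S) (SW S) (SEb S))
      = Matrix.reindex finSumFinEquiv finSumFinEquiv
        (Matrix.fromBlocks 1 0 0 (1 : Matrix (Fin 2) (Fin 2) ℂ)) := by
    rw [Matrix.reindex_apply, ← Matrix.submatrix_mul_equiv _ _ _ finSumFinEquiv.symm _]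
    rw [← Matrix.reindex_apply, ← Matrix.reindex_apply, ← decomp T, ← decomp S, h]
    ext i j
    fin_cases i <;> fin_cases j <;> rfl
  have h2 := (Matrix.reindex finSumFinEquiv finSumFinEquiv).injective e1
  rw [Matrix.fromBlocks_multiply] at h2
  refine ⟨?_, ?_, ?_, ?_⟩
  · have := congrArg Matrix.toBlocks₁₁ h2
    rwa [Matrix.toBlocks_fromBlocks₁₁, Matrix.toBlocks_fromBlocks₁₁] at this
  · have := congrArg Matrix.toBlocks₁₂ h2
    rwa [Matrix.toBlocks_fromBlocks₁₂, Matrix.toBlocks_fromBlocks₁₂] at this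
  · have := congrArg Matrix.toBlocks₂₁ h2
    rwa [Matrix.toBlocks_fromBlocks₂₁, Matrix.toBlocks_fromBlocks₂₁] at this
  · have := congrArg Matrix.toBlocks₂₂ h2
    rwa [Matrix.toBlocks_fromBlocks₂₂, Matrix.toBlocks_fromBlocks₂₂] at this

noncomputable def J2 : Matrix (Fin 2 ⊕ Fin 2) (Fin 2 ⊕ Fin 2) ℂ :=
  Matrix.fromBlocks 0 1 1 0

lemma detJ : J2.det = 1 := by
  rw [← Matrix.det_reindex_self finSumFinEquiv]
  have : Matrix.reindex finSumFinEquiv finSumFinEquiv J2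
      = !![0,0,1,0; 0,0,0,1; 1,0,0,0; 0,1,0,0] := by
    ext i j
    fin_cases i <;> fin_cases j <;> rfl
  rw [this]
  simp [Matrix.det_succ_row_zero, Fin.sum_univ_succ]
  rfl

lemma det_corner_inv {T S : Matrix (Fin 4) (Fin 4) ℂ} (hST : S * T = 1) :
    S.det * (NE T).det = (NE S).det ∧ S.det * (SW T).det = (SW S).det := by
  obtain ⟨b11, b12, b21, b22⟩ := blocks_of_mul_eq_one hST
  have hdS : (Matrix.fromBlocks (NWb S) (NE S) (SW S) (SEb S)).det = S.det := by
    rw [← Matrix.det_reindex_self finSumFinEquiv, ← decomp S]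
  constructor
  · have key : Matrix.fromBlocks (NWb S) (NE S) (SW S) (SEb S) *
        Matrix.fromBlocks (NE T) 0 (SEb T) 1
        = Matrix.fromBlocks (NE S) 0 (SEb S) 1 * J2 := by
      rw [J2, Matrix.fromBlocks_multiply, Matrix.fromBlocks_multiply]
      congr 1 <;> simp [b12, b22]
    have hdet := congrArg Matrix.det key
    rw [Matrix.det_mul, Matrix.det_mul, detJ, Matrix.det_fromBlocks_zero₁₂,
      Matrix.det_fromBlocks_zero₁₂, hdS] at hdet
    simpa using hdet
  · have key : Matrix.fromBlocks (NWb S) (NE S) (SW S) (SEb S) *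
        Matrix.fromBlocks (NWb T) 1 (SW T) 0
        = Matrix.fromBlocks 1 (NWb S) 0 (SW S) := by
      rw [Matrix.fromBlocks_multiply]
      congr 1 <;> simp [b11, b21]
    have hdet := congrArg Matrix.det key
    have hM : (Matrix.fromBlocks (NWb T) (1 : Matrix (Fin 2) (Fin 2) ℂ) (SW T) 0).det
        = (SW T).det := by
      have h5 : Matrix.fromBlocks (NWb T) (1 : Matrix (Fin 2) (Fin 2) ℂ) (SW T) 0
          = Matrix.fromBlocks 1 (NWb T) 0 (SW T) * J2 := by
        rw [J2, Matrix.fromBlocks_multiply]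
        congr 1 <;> simp
      rw [h5, Matrix.det_mul, detJ, Matrix.det_fromBlocks_zero₂₁]
      simp
    rw [Matrix.det_mul, hM, Matrix.det_fromBlocks_zero₂₁, hdS] at hdet
    simpa using hdet

noncomputable def frob (M : Matrix (Fin 2) (Fin 2) ℂ) : ℝ :=
  Complex.normSq (M 0 0) + Complex.normSq (M 0 1)
    + Complex.normSq (M 1 0) + Complex.normSq (M 1 1)

lemma frob_trace (M : Matrix (Fin 2) (Fin 2) ℂ) :
    ((frob M : ℝ) : ℂ) = Matrix.trace (Mᴴ * M) := by
  simp only [Matrix.trace_fin_two, Matrix.mul_apply, Fin.sum_univ_two,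
    Matrix.conjTranspose_apply]
  push_cast [frob, Complex.normSq_eq_conj_mul_self]
  simp only [Complex.star_def]
  ring

lemma normSq_det (M : Matrix (Fin 2) (Fin 2) ℂ) :
    ((Complex.normSq M.det : ℝ) : ℂ) = (Mᴴ * M).det := by
  rw [Matrix.det_mul, Matrix.det_conjTranspose]
  simp [Complex.normSq_eq_conj_mul_self]

lemma frob_corners {T : Matrix (Fin 4) (Fin 4) ℂ} (hn : T * Tᴴ = Tᴴ * T) :
    frob (NE T) = frob (SW T) := by
  have h0 := congrFun (congrFun hn 0) 0
  have h1 := congrFun (congrFun hn 1) 1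
  simp only [Matrix.mul_apply, Fin.sum_univ_four, Matrix.conjTranspose_apply,
    Complex.star_def] at h0 h1
  have h0r := congrArg Complex.re h0
  have h1r := congrArg Complex.re h1
  simp only [← Complex.normSq_eq_conj_mul_self, Complex.mul_conj, Complex.add_re,
    Complex.ofReal_re] at h0r h1r
  simp only [frob, NE, SW]
  simp only [Matrix.cons_val_zero, Matrix.cons_val_one, Matrix.head_cons]
  linarith

lemma sq_inj {a b : ℝ} (ha : 0 ≤ a) (hb : 0 ≤ b) (h : a^2 = b^2) : a = b := by
  have h1 : a ≤ b := by nlinarith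
  have h2 : b ≤ a := by nlinarith
  linarith

theorem stmt5 (T : Matrix (Fin 4) (Fin 4) ℂ)
    (hnormal : T * Tᴴ = Tᴴ * T) (hinv : IsUnit T) :
    ((NE T).rank = (SW T).rank → (NE T⁻¹).rank = (SW T⁻¹).rank) ∧
    (opN (NE T) = opN (SW T) → opN (NE T⁻¹) = opN (SW T⁻¹)) := by
  have hdet : IsUnit T.det := (Matrix.isUnit_iff_isUnit_det T).mp hinv
  have hTS : T * T⁻¹ = 1 := Matrix.mul_nonsing_inv T hdet
  have hST : T⁻¹ * T = 1 := Matrix.nonsing_inv_mul T hdet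
  set S := T⁻¹ with hSdef
  obtain ⟨a11, a12, a21, a22⟩ := blocks_of_mul_eq_one hTS
  obtain ⟨b11, b12, b21, b22⟩ := blocks_of_mul_eq_one hST
  constructor
  · intro hrk
    have r1 : (NE T).rank ≤ (NE S).rank :=
      rank_aux (NWb T) (NE T) (SW T) (SEb T) (NE S) (SEb S) a12 a22
    have r2 : (NE S).rank ≤ (NE T).rank :=
      rank_aux (NWb S) (NE S) (SW S) (SEb S) (NE T) (SEb T) b12 b22
    have r3 : (SW T).rank ≤ (SW S).rank :=
      rank_aux (SEb T) (SW T) (NE T) (NWb T) (SW S) (NWb S)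
        (by rw [add_comm]; exact a21) (by rw [add_comm]; exact a11)
    have r4 : (SW S).rank ≤ (SW T).rank :=
      rank_aux (SEb S) (SW S) (NE S) (NWb S) (SW T) (NWb T)
        (by rw [add_comm]; exact b21) (by rw [add_comm]; exact b11)
    omega
  · intro hop
    have hSH : Sᴴ = (Tᴴ)⁻¹ := Matrix.conjTranspose_nonsing_inv T
    have hSn : S * Sᴴ = Sᴴ * S := by
      rw [hSH, hSdef, ← Matrix.mul_inv_rev, ← Matrix.mul_inv_rev, hnormal]
    have hfT : frob (NE T) = frob (SW T) := frob_corners hnormal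
    have hfS : frob (NE S) = frob (SW S) := frob_corners hSn
    have k1 := opN_key (NE T) (frob (NE T)) (Complex.normSq (NE T).det)
      (frob_trace _) (normSq_det _)
    have k2 := opN_key (SW T) (frob (SW T)) (Complex.normSq (SW T).det)
      (frob_trace _) (normSq_det _)
    have k3 := opN_key (NE S) (frob (NE S)) (Complex.normSq (NE S).det)
      (frob_trace _) (normSq_det _)
    have k4 := opN_key (SW S) (frob (SW S)) (Complex.normSq (SW S).det)
      (frob_trace _) (normSq_det _)
    rw [hop, hfT] at k1
    have hd : Complex.normSq (NE T).det = Complex.normSq (SW T).det := by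
      linarith [k1.1, k2.1]
    obtain ⟨dNE, dSW⟩ := det_corner_inv hST
    have hdS : Complex.normSq (NE S).det = Complex.normSq (SW S).det := by
      have e1 := congrArg Complex.normSq dNE
      have e2 := congrArg Complex.normSq dSW
      rw [_root_.map_mul] at e1 e2
      rw [← e1, ← e2, hd]
    rw [hfS, hdS] at k3
    have hfact : ((opN (NE S))^2 - (opN (SW S))^2) *
        ((opN (NE S))^2 + (opN (SW S))^2 - frob (SW S)) = 0 := by
      linear_combination k3.1 - k4.1
    have hxy : (opN (NE S))^2 = (opN (SW S))^2 := by
      rcases mul_eq_zero.mp hfact with h | h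
      · linarith [h]
      · linarith [k3.2, k4.2, h]
    exact sq_inj (opN_nonneg _) (opN_nonneg _) hxy
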